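/- Let w ∈ ℂ and x₁, x₂, x₃ ∈ ℂ with Im(xᵢ·conj(xⱼ)) ≠ 0 for all i ≠ j (in particular every xᵢ ≠ 0 and every ratio xᵢ/xⱼ with i ≠ j has nonzero imaginary part). Then Im P₃(w,x₁,x₂,x₃) = R₃(Im(w/x₃), Im(x₁/x₃), Im(x₂/x₃)) + R₃(Im(w/x₁), Im(x₂/x₁), Im(x₃/x₁)) + R₃(Im(w/x₂), Im(x₃/x₂), Im(x₁/x₂)). -/

import Mathlib

namespace EGG

/-- Integer vectors in `ℤ³`. -/
abbrev V : Type := Fin 3 → ℤ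

/-- gcd of the three coordinates. -/
def gcd3 (v : V) : ℕ := Nat.gcd (Nat.gcd (v 0).natAbs (v 1).natAbs) (v 2).natAbs

/-- A vector of `ℤ³` is primitive if it is nonzero and the gcd of its coordinates is 1. -/
def Primitive (a : V) : Prop := a ≠ 0 ∧ gcd3 a = 1

/-- Cross product of integer vectors. -/
def cross (a b : V) : V :=
  ![a 1 * b 2 - a 2 * b 1, a 2 * b 0 - a 0 * b 2, a 0 * b 1 - a 1 * b 0]

/-- Dot product of integer vectors. -/
def dotZ (α a : V) : ℤ := α 0 * a 0 + α 1 * a 1 + α 2 * a 2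

/-- Dot product of a rational vector with an integer vector. -/
def dotQ (α : Fin 3 → ℚ) (a : V) : ℚ := α 0 * (a 0 : ℚ) + α 1 * (a 1 : ℚ) + α 2 * (a 2 : ℚ)

/-- Dot product of a real vector with an integer vector. -/
def dotR (l : Fin 3 → ℝ) (a : V) : ℝ := l 0 * (a 0 : ℝ) + l 1 * (a 1 : ℝ) + l 2 * (a 2 : ℝ)

/-- The pairing `α(x) = α₁x₁+α₂x₂+α₃x₃` of a rational vector with a complex vector. -/
noncomputable def pairQ (α : Fin 3 → ℚ) (x : Fin 3 → ℂ) : ℂ :=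
  (α 0 : ℂ) * x 0 + (α 1 : ℂ) * x 1 + (α 2 : ℂ) * x 2

/-- The pairing `α(x) = α₁x₁+α₂x₂+α₃x₃` of an integer vector with a complex vector. -/
noncomputable def pairZ (α : V) (x : Fin 3 → ℂ) : ℂ :=
  (α 0 : ℂ) * x 0 + (α 1 : ℂ) * x 1 + (α 2 : ℂ) * x 2

/-- The canonical map `ℤ³ → ℚ³`. -/
def toQ (a : V) : Fin 3 → ℚ := fun i => (a i : ℚ)

/-- Determinant of the 3×3 matrix with rows `α, β, δ`. -/
def det3Q (α β δ : Fin 3 → ℚ) : ℚ := Matrix.det (Matrix.of ![α, β, δ])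

/-- `(α, β)` is an oriented basis of the plane `H(a) = {α : α·a = 0}`. -/
def IsOrientedBasis (a : V) (α β : Fin 3 → ℚ) : Prop :=
  dotQ α a = 0 ∧ dotQ β a = 0 ∧
  LinearIndependent ℚ ![α, β] ∧
  (∀ δ : Fin 3 → ℚ, dotQ δ a = 0 → ∃ p q : ℚ, δ = p • α + q • β) ∧
  (∀ δ : Fin 3 → ℚ, 0 < dotQ δ a → 0 < det3Q α β δ)

/-- The domain `U⁺_a ⊆ ℂ³`. -/
noncomputable def UPlus (a : V) : Set (Fin 3 → ℂ) :=
  {x | ∃ α β : Fin 3 → ℚ, IsOrientedBasis a α β ∧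
    0 < (pairQ α x * (starRingEnd ℂ) (pairQ β x)).im}

/-- `γ` is the direction vector of the wedge `(a,b)`: `γ` is primitive and
`a × b = s • γ` for some integer `s ≥ 1` (the modulus). -/
def IsDirVec (a b γ : V) : Prop :=
  Primitive γ ∧ ∃ s : ℤ, 1 ≤ s ∧ cross a b = s • γ

/-- `C₊₋(a,b) = {δ ∈ ℤ³ : δ·a > 0, δ·b ≤ 0}`. -/
def Cpm (a b : V) : Set V := {δ | 0 < dotZ δ a ∧ dotZ δ b ≤ 0}

/-- `C₋₊(a,b) = {δ ∈ ℤ³ : δ·a ≤ 0, δ·b > 0}`. -/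
def Cmp (a b : V) : Set V := {δ | dotZ δ a ≤ 0 ∧ 0 < dotZ δ b}

/-- The factor `1 - e^{-2πi(δ(x)-w)/γ(x)}` appearing in the numerator of `Γ_{a,b}`. -/
noncomputable def gammaFacP (γ : V) (x : Fin 3 → ℂ) (w : ℂ) (δ : V) : ℂ :=
  1 - Complex.exp (-(2 * (Real.pi : ℂ) * Complex.I) * (pairZ δ x - w) / pairZ γ x)

/-- The factor `1 - e^{2πi(δ(x)-w)/γ(x)}` appearing in the denominator of `Γ_{a,b}`. -/
noncomputable def gammaFacM (γ : V) (x : Fin 3 → ℂ) (w : ℂ) (δ : V) : ℂ :=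
  1 - Complex.exp ((2 * (Real.pi : ℂ) * Complex.I) * (pairZ δ x - w) / pairZ γ x)

/-- The gamma function `Γ_{a,b}(w,x)` of the wedge `(a,b)` with direction vector `γ`:
the products run over the sets `C₊₋(a,b)/ℤγ` and `C₋₊(a,b)/ℤγ`; each factor is evaluated
on the chosen representative `Quotient.out q` of the class `q` (the factors are constant
on classes modulo `ℤγ`). -/
noncomputable def GammaWedge (a b γ : V) (w : ℂ) (x : Fin 3 → ℂ) : ℂ :=
  if a = b then 1 else
    (∏' q : (QuotientAddGroup.mk '' Cpm a b : Set (V ⧸ AddSubgroup.zmultiples γ)),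
      gammaFacP γ x w (Quotient.out (q : V ⧸ AddSubgroup.zmultiples γ))) /
    (∏' q : (QuotientAddGroup.mk '' Cmp a b : Set (V ⧸ AddSubgroup.zmultiples γ)),
      gammaFacM γ x w (Quotient.out (q : V ⧸ AddSubgroup.zmultiples γ)))

/-- The theta function `θ₀(z,τ)`, for `Im τ > 0`. -/
noncomputable def theta0 (z τ : ℂ) : ℂ :=
  ∏' j : ℕ, ((1 - Complex.exp (2 * (Real.pi : ℂ) * Complex.I * (((j : ℂ) + 1) * τ - z))) *
    (1 - Complex.exp (2 * (Real.pi : ℂ) * Complex.I * ((j : ℂ) * τ + z))))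

/-- The elliptic gamma function `Γ(z,τ,σ)`, for `Im τ > 0` and `Im σ > 0`. -/
noncomputable def ellGamma (z τ σ : ℂ) : ℂ :=
  (∏' p : ℕ × ℕ, (1 - Complex.exp (2 * (Real.pi : ℂ) * Complex.I *
      (((p.1 : ℂ) + 1) * τ + ((p.2 : ℂ) + 1) * σ - z)))) /
  (∏' p : ℕ × ℕ, (1 - Complex.exp (2 * (Real.pi : ℂ) * Complex.I *
      ((p.1 : ℂ) * τ + (p.2 : ℂ) * σ + z))))

/-- The elliptic gamma function `Γ̃(z,τ,σ)` in the domain `Im τ < 0 < Im σ`. -/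
noncomputable def ellGammaTilde (z τ σ : ℂ) : ℂ :=
  (∏' p : ℕ × ℕ, (1 - Complex.exp (2 * (Real.pi : ℂ) * Complex.I *
      (z - ((p.1 : ℂ) + 1) * τ + (p.2 : ℂ) * σ)))) /
  (∏' p : ℕ × ℕ, (1 - Complex.exp (2 * (Real.pi : ℂ) * Complex.I *
      (-z - (p.1 : ℂ) * τ + ((p.2 : ℂ) + 1) * σ))))

/-- The polynomial `P₂`. -/
noncomputable def P2 (w x₁ x₂ : ℂ) : ℂ :=
  (w ^ 2 - (x₁ + x₂) * w + (x₁ ^ 2 + x₂ ^ 2 + 3 * x₁ * x₂) / 6) / (x₁ * x₂)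

/-- The Bernoulli polynomial `P₃ = B₃,₃`. -/
noncomputable def P3 (w x₁ x₂ x₃ : ℂ) : ℂ :=
  w ^ 3 / (x₁ * x₂ * x₃) - (3 * (x₁ + x₂ + x₃) / (2 * (x₁ * x₂ * x₃))) * w ^ 2
    + ((x₁ ^ 2 + x₂ ^ 2 + x₃ ^ 2 + 3 * x₁ * x₂ + 3 * x₂ * x₃ + 3 * x₁ * x₃)
        / (2 * (x₁ * x₂ * x₃))) * w
    - (1 / 4) * (x₁ + x₂ + x₃) * (1 / x₁ + 1 / x₂ + 1 / x₃)

/-- The real polynomial `R₃ = B₂,₃`. -/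
noncomputable def R3 (ζ t s : ℝ) : ℝ :=
  ζ ^ 3 / (t * s) - (3 / 2) * (1 / t + 1 / s) * ζ ^ 2
    + (t / (2 * s) + s / (2 * t) + 3 / 2) * ζ - (t + s) / 4

/-- The hermitian weight `h₂(z,τ)` for the theta bundle. -/
noncomputable def h2 (z τ : ℂ) : ℝ :=
  Real.exp (-2 * Real.pi * z.im ^ 2 / τ.im + 2 * Real.pi * (z - τ / 6).im)

/-- The hermitian weight `h₃(z,τ,σ)`. -/
noncomputable def h3 (z τ σ : ℂ) : ℝ :=
  Real.exp (-(2 * Real.pi / 3) * R3 z.im τ.im σ.im)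

/-- The finite product of theta functions `Δ` with parameters `A₁ = α₁(x)`, `A₂ = α₂(x)`,
`A₃ = α₃(x)` and first framing coordinate `m = μ(a)`:
`∏_{j=0}^{m-1} θ₀((w+jA₁)/A₃, A₂/A₃)` for `m ≥ 0` and
`(∏_{j=m}^{-1} θ₀((w+jA₁)/A₃, A₂/A₃))⁻¹` for `m < 0`. -/
noncomputable def DeltaInt (w A₁ A₂ A₃ : ℂ) (m : ℤ) : ℂ :=
  if 0 ≤ m then
    ∏ j ∈ Finset.range m.toNat, theta0 ((w + (j : ℂ) * A₁) / A₃) (A₂ / A₃)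
  else
    (∏ j ∈ Finset.range (-m).toNat, theta0 ((w - ((j : ℂ) + 1) * A₁) / A₃) (A₂ / A₃))⁻¹



private lemma div_im' (A B : ℂ) :
    (A / B).im = (A * (starRingEnd ℂ) B).im / Complex.normSq B := by
  simp [Complex.div_im, Complex.mul_im, Complex.conj_re, Complex.conj_im, Complex.normSq_apply,
    sub_div]
  ring

private lemma R3_eq (ζ t s : ℝ) (ht : t ≠ 0) (hs : s ≠ 0) :
    R3 ζ t s = (4 * ζ ^ 3 - 6 * (t + s) * ζ ^ 2 + (2 * t ^ 2 + 2 * s ^ 2 + 6 * (t * s)) * ζ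
      - (t + s) * (t * s)) / (4 * (t * s)) := by
  unfold R3; field_simp [ht, hs]; ring

private lemma R3_div (A B C n : ℝ) (hB : B ≠ 0) (hC : C ≠ 0) (hn : n ≠ 0) :
    R3 (A / n) (B / n) (C / n) = R3 A B C / n := by
  unfold R3; field_simp [hB, hC, hn]

set_option maxHeartbeats 1000000 in
private lemma P3_eq3 (w a b c : ℂ) (ha : a ≠ 0) (hb : b ≠ 0) (hc : c ≠ 0) :
    P3 w a b c = (4 * w ^ 3 - 6 * (a + b + c) * w ^ 2
      + 2 * (a ^ 2 + b ^ 2 + c ^ 2 + 3 * a * b + 3 * b * c + 3 * a * c) * w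
      - (a + b + c) * (b * c + a * c + a * b)) / (4 * (a * b * c)) := by
  unfold P3
  field_simp [ha, hb, hc]
  have hD : a * b * c ≠ 0 := by simp [mul_ne_zero_iff, ha, hb, hc]
  have h2D : 2 * (a * b * c) ≠ 0 := by simp [mul_ne_zero_iff, ha, hb, hc]
  ring

set_option maxHeartbeats 1000000 in
private lemma P3_homog_mul (z u v w₃ l : ℂ) (hu : u ≠ 0) (hv : v ≠ 0) (hw : w₃ ≠ 0)
    (hl : l ≠ 0) : P3 (z * l) (u * l) (v * l) (w₃ * l) = P3 z u v w₃ := by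
  rw [P3_eq3 _ _ _ _ (mul_ne_zero hu hl) (mul_ne_zero hv hl) (mul_ne_zero hw hl),
    P3_eq3 _ _ _ _ hu hv hw,
    div_eq_div_iff (by simp [mul_ne_zero_iff, hu, hv, hw, hl])
      (by simp [mul_ne_zero_iff, hu, hv, hw])]
  ring

set_option maxHeartbeats 4000000 in
private lemma core (z u v : ℂ) (hd : u.im ≠ 0) (hf : v.im ≠ 0)
    (hg : (u * (starRingEnd ℂ) v).im ≠ 0) :
    (P3 z u v 1).im = R3 z.im u.im v.im
      + R3 (z * (starRingEnd ℂ) u).im (v * (starRingEnd ℂ) u).im (-u.im) / Complex.normSq u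
      + R3 (z * (starRingEnd ℂ) v).im (-v.im) (u * (starRingEnd ℂ) v).im / Complex.normSq v := by
  have hu : u ≠ 0 := fun h => hd (by simp [h])
  have hv : v ≠ 0 := fun h => hf (by simp [h])
  have hNu : Complex.normSq u ≠ 0 := (Complex.normSq_pos.mpr hu).ne'
  have hNv : Complex.normSq v ≠ 0 := (Complex.normSq_pos.mpr hv).ne'
  have hB2 : (v * (starRingEnd ℂ) u).im ≠ 0 := by
    have h : v * (starRingEnd ℂ) u = (starRingEnd ℂ) (u * (starRingEnd ℂ) v) := by
      rw [map_mul, Complex.conj_conj, mul_comm]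
    rw [h, Complex.conj_im]
    exact neg_ne_zero.mpr hg
  have ne01 : 4 * (u.im * v.im) ≠ 0 := by simp [mul_ne_zero_iff, hd, hf]
  have ne02 : 4 * ((v * (starRingEnd ℂ) u).im * -u.im) * Complex.normSq u ≠ 0 :=
    mul_ne_zero (mul_ne_zero (by norm_num) (mul_ne_zero hB2 (neg_ne_zero.mpr hd))) hNu
  have ne03 : 4 * (-v.im * (u * (starRingEnd ℂ) v).im) * Complex.normSq v ≠ 0 :=
    mul_ne_zero (mul_ne_zero (by norm_num) (mul_ne_zero (neg_ne_zero.mpr hf) hg)) hNv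
  rw [P3_eq3 z u v 1 hu hv one_ne_zero, div_im',
      R3_eq _ _ _ hd hf, R3_eq _ _ _ hB2 (neg_ne_zero.mpr hd),
      R3_eq _ _ _ (neg_ne_zero.mpr hf) hg, div_div, div_div,
      div_add_div _ _ ne01 ne02, div_add_div _ _ (mul_ne_zero ne01 ne02) ne03,
      div_eq_div_iff ((Complex.normSq_pos.mpr (by simp [mul_ne_zero_iff, hu, hv] :
          (4 : ℂ) * (u * v * 1) ≠ 0)).ne')
        (mul_ne_zero (mul_ne_zero ne01 ne02) ne03)]
  simp only [Complex.mul_re, Complex.mul_im, Complex.sub_re, Complex.sub_im, Complex.add_re,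
    Complex.add_im, Complex.conj_re, Complex.conj_im, Complex.normSq_apply, Complex.one_re,
    Complex.one_im, Complex.re_ofNat, Complex.im_ofNat, pow_succ, pow_zero, one_mul, mul_one,
    mul_neg, neg_neg, neg_mul]
  ring

/-- `Im P₃(w,x₁,x₂,x₃)` as a sum of three `R₃`-terms. -/
theorem statement11 (w x₁ x₂ x₃ : ℂ)
    (h12 : (x₁ * (starRingEnd ℂ) x₂).im ≠ 0)
    (h13 : (x₁ * (starRingEnd ℂ) x₃).im ≠ 0)
    (h23 : (x₂ * (starRingEnd ℂ) x₃).im ≠ 0) :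
    (P3 w x₁ x₂ x₃).im =
      R3 (w / x₃).im (x₁ / x₃).im (x₂ / x₃).im +
      R3 (w / x₁).im (x₂ / x₁).im (x₃ / x₁).im +
      R3 (w / x₂).im (x₃ / x₂).im (x₁ / x₂).im := by
  have hx1 : x₁ ≠ 0 := fun h => h12 (by simp [h])
  have hx2 : x₂ ≠ 0 := fun h => h12 (by simp [h])
  have hx3 : x₃ ≠ 0 := fun h => h13 (by simp [h])
  have hN3 : Complex.normSq x₃ ≠ 0 := (Complex.normSq_pos.mpr hx3).ne'
  set z : ℂ := w / x₃ with hz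
  set u : ℂ := x₁ / x₃ with hu
  set v : ℂ := x₂ / x₃ with hv
  have hd : u.im ≠ 0 := by rw [hu, div_im']; exact div_ne_zero h13 hN3
  have hf : v.im ≠ 0 := by rw [hv, div_im']; exact div_ne_zero h23 hN3
  have huv : u * (starRingEnd ℂ) v = (x₁ * (starRingEnd ℂ) x₂) / ((Complex.normSq x₃ : ℝ) : ℂ) := by
    rw [hu, hv, map_div₀, div_mul_div_comm, Complex.mul_conj]
  have hg : (u * (starRingEnd ℂ) v).im ≠ 0 := by
    rw [huv, Complex.div_ofReal_im]
    exact div_ne_zero h12 hN3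
  have hNu : Complex.normSq u ≠ 0 := (Complex.normSq_pos.mpr (fun h => hd (by simp [h]))).ne'
  have hNv : Complex.normSq v ≠ 0 := (Complex.normSq_pos.mpr (fun h => hf (by simp [h]))).ne'
  have hB2 : (v * (starRingEnd ℂ) u).im ≠ 0 := by
    have h : v * (starRingEnd ℂ) u = (starRingEnd ℂ) (u * (starRingEnd ℂ) v) := by
      rw [map_mul, Complex.conj_conj, mul_comm]
    rw [h, Complex.conj_im]
    exact neg_ne_zero.mpr hg
  have hP : P3 w x₁ x₂ x₃ = P3 z u v 1 := by
    have h1 : w = z * x₃ := by rw [hz, div_mul_cancel₀ _ hx3]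
    have h2 : x₁ = u * x₃ := by rw [hu, div_mul_cancel₀ _ hx3]
    have h3 : x₂ = v * x₃ := by rw [hv, div_mul_cancel₀ _ hx3]
    have h4 : x₃ = 1 * x₃ := (one_mul x₃).symm
    calc P3 w x₁ x₂ x₃ = P3 (z * x₃) (u * x₃) (v * x₃) (1 * x₃) := by
          rw [← h1, ← h2, ← h3, ← h4]
      _ = P3 z u v 1 := P3_homog_mul z u v 1 x₃
          (fun h => hd (by simp [h])) (fun h => hf (by simp [h])) one_ne_zero hx3
  have e1 : (w / x₁).im = (z * (starRingEnd ℂ) u).im / Complex.normSq u := by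
    rw [← div_im', show z / u = w / x₁ from by rw [hz, hu, div_div_div_cancel_right₀ hx3]]
  have e2 : (x₂ / x₁).im = (v * (starRingEnd ℂ) u).im / Complex.normSq u := by
    rw [← div_im', show v / u = x₂ / x₁ from by rw [hv, hu, div_div_div_cancel_right₀ hx3]]
  have e3 : (x₃ / x₁).im = -u.im / Complex.normSq u := by
    rw [show x₃ / x₁ = 1 / u from by rw [hu, one_div_div], one_div, Complex.inv_im]
  have e4 : (w / x₂).im = (z * (starRingEnd ℂ) v).im / Complex.normSq v := by
    rw [← div_im', show z / v = w / x₂ from by rw [hz, hv, div_div_div_cancel_right₀ hx3]]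
  have e5 : (x₃ / x₂).im = -v.im / Complex.normSq v := by
    rw [show x₃ / x₂ = 1 / v from by rw [hv, one_div_div], one_div, Complex.inv_im]
  have e6 : (x₁ / x₂).im = (u * (starRingEnd ℂ) v).im / Complex.normSq v := by
    rw [← div_im', show u / v = x₁ / x₂ from by rw [hu, hv, div_div_div_cancel_right₀ hx3]]
  rw [hP, core z u v hd hf hg, e1, e2, e3, e4, e5, e6,
    R3_div _ _ _ _ hB2 (neg_ne_zero.mpr hd) hNu,
    R3_div _ _ _ _ (neg_ne_zero.mpr hf) hg hNv]

end EGG
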